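/- Let G be a group and g ∈ G such that the cyclic subgroup ⟨g⟩ is subnormal in G of defect k (there is a chain ⟨g⟩ = H_0 ⊴ H_1 ⊴ ... ⊴ H_k = G). Then [G,_k ⟨g⟩] ≤ ⟨g⟩ and hence [x,_{k+1} g] = 1 for all x ∈ G, i.e., g is a bounded left Engel element. -/

import Mathlib

set_option maxHeartbeats 1000000


/-- The commutator `[a,b] = a⁻¹ b⁻¹ a b`. -/
def cmt {G : Type*} [Group G] (a b : G) : G := a⁻¹ * b⁻¹ * a * b

/-- Left-normed Engel commutator: `engel x y 0 = x`, `engel x y (n+1) = [engel x y n, y]`. -/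
def engel {G : Type*} [Group G] (x y : G) : ℕ → G
  | 0 => x
  | n + 1 => cmt (engel x y n) y

/-- Iterated subgroup commutator: `iterSub A 0 = ⊤ = G`, `iterSub A (k+1) = ⁅iterSub A k, A⁆`. -/
def iterSub {G : Type*} [Group G] (A : Subgroup G) : ℕ → Subgroup G
  | 0 => ⊤
  | k + 1 => ⁅iterSub A k, A⁆

open scoped commutatorElement

theorem stmt13 {G : Type*} [Group G] (g : G) (k : ℕ)
    (H : Fin (k + 1) → Subgroup G)
    (h0 : H 0 = Subgroup.zpowers g) (hk : H (Fin.last k) = ⊤)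
    (hle : ∀ i : Fin k, H i.castSucc ≤ H i.succ)
    (hnorm : ∀ i : Fin k, ∀ u ∈ H i.castSucc, ∀ v ∈ H i.succ,
      v⁻¹ * u * v ∈ H i.castSucc) :
    iterSub (Subgroup.zpowers g) k ≤ Subgroup.zpowers g ∧
      ∀ x : G, engel x g (k + 1) = 1 := by
  -- zpowers g is contained in every member of the chain
  have hmono : ∀ n : ℕ, ∀ hn : n ≤ k,
      Subgroup.zpowers g ≤ H ⟨n, Nat.lt_succ_of_le hn⟩ := by
    intro n
    induction n with
    | zero => intro _; exact le_of_eq h0.symm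
    | succ m ih =>
      intro hn
      have h1 := hle ⟨m, by omega⟩
      exact le_trans (ih (by omega)) h1
  -- key commutator step
  have hcomm : ∀ i : Fin k, ⁅H i.succ, Subgroup.zpowers g⁆ ≤ H i.castSucc := by
    intro i
    rw [Subgroup.commutator_le]
    intro u hu v hv
    have hv' : v ∈ H i.castSucc := hmono i.1 (by omega) hv
    have h1 : (u⁻¹)⁻¹ * v * u⁻¹ ∈ H i.castSucc :=
      hnorm i v hv' u⁻¹ (inv_mem hu)
    have h2 : ((u⁻¹)⁻¹ * v * u⁻¹) * v⁻¹ ∈ H i.castSucc :=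
      mul_mem h1 (inv_mem hv')
    have : ⁅u, v⁆ = ((u⁻¹)⁻¹ * v * u⁻¹) * v⁻¹ := by
      simp [commutatorElement_def]
    rwa [this]
  -- iterSub descends along the chain
  have hiter : ∀ j : ℕ, ∀ hj : j ≤ k,
      iterSub (Subgroup.zpowers g) j ≤ H ⟨k - j, by omega⟩ := by
    intro j
    induction j with
    | zero => intro _; rw [show (⟨k - 0, by omega⟩ : Fin (k+1)) = Fin.last k from Fin.ext (by simp), hk]; exact le_top
    | succ m ih =>
      intro hj
      have h2 : ((⟨k - m - 1, by omega⟩ : Fin k).succ : Fin (k+1)) = ⟨k - m, by omega⟩ :=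
        Fin.ext (by show k - m - 1 + 1 = k - m; omega)
      have h3 : ((⟨k - m - 1, by omega⟩ : Fin k).castSucc : Fin (k+1)) = ⟨k - (m + 1), by omega⟩ :=
        Fin.ext (by show k - m - 1 = k - (m + 1); omega)
      have h4 := hcomm ⟨k - m - 1, by omega⟩
      refine le_trans (Subgroup.commutator_mono (ih (by omega)) le_rfl) ?_
      refine le_trans (le_of_eq ?_) (le_trans h4 (le_of_eq (congrArg H h3)))
      exact congrArg (fun t => ⁅H t, Subgroup.zpowers g⁆) h2.symm
  have part1 : iterSub (Subgroup.zpowers g) k ≤ Subgroup.zpowers g := by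
    have := hiter k le_rfl
    rwa [show (⟨k - k, by omega⟩ : Fin (k+1)) = 0 from Fin.ext (by simp), h0] at this
  refine ⟨part1, ?_⟩
  -- engel elements live in iterSub
  have hmem : ∀ x : G, ∀ j : ℕ, engel x g j ∈ iterSub (Subgroup.zpowers g) j := by
    intro x j
    induction j with
    | zero => exact Subgroup.mem_top x
    | succ m ih =>
      show cmt (engel x g m) g ∈ ⁅iterSub (Subgroup.zpowers g) m, Subgroup.zpowers g⁆
      have : cmt (engel x g m) g = ⁅(engel x g m)⁻¹, g⁻¹⁆ := by
        simp [cmt, commutatorElement_def]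
      rw [this]
      exact Subgroup.commutator_mem_commutator (inv_mem ih)
        (inv_mem (Subgroup.mem_zpowers g))
  intro x
  obtain ⟨n, hn⟩ := part1 (hmem x k)
  show cmt (engel x g k) g = 1
  rw [← hn, cmt]
  group
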